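/- Let f : x ⟶ w and f' : y ⟶ x be 1-cells of a bicategory. (a) If f is a lari, then the composite f' ≫ f is a lari if and only if f' is a lari. (b) If f is a rari, then the composite f' ≫ f is a rari if and only if f' is a rari. -/
import Mathlib


open CategoryTheory

/-- A 1-cell `f` in a bicategory is a *lari* (left adjoint and left inverse up to
invertible 2-cell) if it has a right adjoint with invertible unit. -/
def IsLari {B : Type*} [Bicategory B] {a b : B} (f : a ⟶ b) : Prop :=
  ∃ (g : b ⟶ a) (adj : Bicategory.Adjunction f g), IsIso adj.unit

/-- A 1-cell `f` in a bicategory is a *rari* (right adjoint and right inverse up to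
invertible 2-cell) if it has a left adjoint with invertible counit. -/
def IsRari {B : Type*} [Bicategory B] {a b : B} (f : a ⟶ b) : Prop :=
  ∃ (e : b ⟶ a) (adj : Bicategory.Adjunction e f), IsIso adj.counit

namespace StmtAux

open CategoryTheory.Bicategory

variable {B : Type*} [Bicategory B] {x w y : B}

/-- Cancellation adjunction for laris. -/
noncomputable def lariCancelAdj {f : x ⟶ w} {g : w ⟶ x} {f' : y ⟶ x} {h : w ⟶ y}
    (adj : Adjunction f g) (adj' : Adjunction (f' ≫ f) h) [IsIso adj.unit] :
    Adjunction f' (f ≫ h) where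
  unit := adj'.unit ⊗≫ 𝟙 _
  counit := 𝟙 _ ⊗≫ (f ≫ h ≫ f') ◁ adj.unit ⊗≫ f ◁ adj'.counit ▷ g ⊗≫ inv adj.unit
  left_triangle := by
    calc
      _ = 𝟙 _ ⊗≫ (adj'.unit ▷ (f' ≫ 𝟙 x) ≫ ((f' ≫ f) ≫ h) ◁ (f' ◁ adj.unit)) ⊗≫
            (f' ≫ f) ◁ adj'.counit ▷ g ⊗≫ f' ◁ inv adj.unit ⊗≫ 𝟙 _ := by
          bicategory
      _ = 𝟙 _ ⊗≫ f' ◁ adj.unit ⊗≫ (leftZigzag adj'.unit adj'.counit) ▷ g ⊗≫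
            f' ◁ inv adj.unit ⊗≫ 𝟙 _ := by
          rw [← whisker_exchange]; bicategory
      _ = 𝟙 _ ⊗≫ f' ◁ (adj.unit ≫ inv adj.unit) ⊗≫ 𝟙 _ := by
          rw [adj'.left_triangle]; bicategory
      _ = (λ_ f').hom ≫ (ρ_ f').inv := by
          rw [IsIso.hom_inv_id]; bicategory
  right_triangle := by
    have key : inv adj.unit ▷ (f ≫ h) = 𝟙 _ ⊗≫ f ◁ adj.counit ▷ h ⊗≫ 𝟙 _ := by
      rw [← cancel_epi (adj.unit ▷ (f ≫ h))]
      calc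
        _ = 𝟙 (𝟙 x ≫ f ≫ h) := by
          rw [← comp_whiskerRight, IsIso.hom_inv_id, id_whiskerRight]
        _ = 𝟙 _ ⊗≫ (leftZigzag adj.unit adj.counit) ▷ h ⊗≫ 𝟙 _ := by
          rw [adj.left_triangle]; bicategory
        _ = adj.unit ▷ (f ≫ h) ≫ (𝟙 _ ⊗≫ f ◁ adj.counit ▷ h ⊗≫ 𝟙 _) := by
          bicategory
    calc
      _ = 𝟙 _ ⊗≫ (f ≫ h) ◁ adj'.unit ⊗≫ (f ≫ h ≫ f') ◁ adj.unit ▷ (f ≫ h) ⊗≫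
            f ◁ adj'.counit ▷ (g ≫ f ≫ h) ⊗≫ inv adj.unit ▷ (f ≫ h) ⊗≫ 𝟙 _ := by
          bicategory
      _ = 𝟙 _ ⊗≫ (f ≫ h) ◁ adj'.unit ⊗≫ (f ≫ h ≫ f') ◁ adj.unit ▷ (f ≫ h) ⊗≫
            f ◁ (adj'.counit ▷ (g ≫ f) ≫ 𝟙 w ◁ adj.counit) ▷ h ⊗≫ 𝟙 _ := by
          rw [key]; bicategory
      _ = 𝟙 _ ⊗≫ (f ≫ h) ◁ adj'.unit ⊗≫ (f ≫ h ≫ f') ◁ adj.unit ▷ (f ≫ h) ⊗≫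
            f ◁ ((h ≫ f' ≫ f) ◁ adj.counit ≫ adj'.counit ▷ 𝟙 w) ▷ h ⊗≫ 𝟙 _ := by
          rw [← whisker_exchange]
      _ = 𝟙 _ ⊗≫ (f ≫ h) ◁ adj'.unit ⊗≫
            (f ≫ h ≫ f') ◁ (leftZigzag adj.unit adj.counit) ▷ h ⊗≫
            f ◁ adj'.counit ▷ h ⊗≫ 𝟙 _ := by
          bicategory
      _ = 𝟙 _ ⊗≫ f ◁ (rightZigzag adj'.unit adj'.counit) ⊗≫ 𝟙 _ := by
          rw [adj.left_triangle]; bicategory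
      _ = (ρ_ (f ≫ h)).hom ≫ (λ_ (f ≫ h)).inv := by
          rw [adj'.right_triangle]; bicategory

/-- Cancellation adjunction for raris. -/
noncomputable def rariCancelAdj {f : x ⟶ w} {e : w ⟶ x} {f' : y ⟶ x} {k : w ⟶ y}
    (adj : Adjunction e f) (adj' : Adjunction k (f' ≫ f)) [IsIso adj.counit] :
    Adjunction (f ≫ k) f' where
  unit := inv adj.counit ⊗≫ f ◁ adj'.unit ▷ e ⊗≫ (f ≫ k ≫ f') ◁ adj.counit ⊗≫ 𝟙 _
  counit := 𝟙 _ ⊗≫ adj'.counit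
  left_triangle := by
    have key2 : inv adj.counit ▷ (f ≫ k) = 𝟙 _ ⊗≫ f ◁ adj.unit ▷ k ⊗≫ 𝟙 _ := by
      rw [← cancel_mono (adj.counit ▷ (f ≫ k))]
      calc
        _ = 𝟙 (𝟙 x ≫ f ≫ k) := by
          rw [← comp_whiskerRight, IsIso.inv_hom_id, id_whiskerRight]
        _ = 𝟙 _ ⊗≫ (rightZigzag adj.unit adj.counit) ▷ k ⊗≫ 𝟙 _ := by
          rw [adj.right_triangle]; bicategory
        _ = (𝟙 _ ⊗≫ f ◁ adj.unit ▷ k ⊗≫ 𝟙 _) ≫ adj.counit ▷ (f ≫ k) := by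
          bicategory
    calc
      _ = 𝟙 _ ⊗≫ inv adj.counit ▷ (f ≫ k) ⊗≫ f ◁ adj'.unit ▷ (e ≫ f ≫ k) ⊗≫
            (f ≫ k ≫ f') ◁ adj.counit ▷ (f ≫ k) ⊗≫ (f ≫ k) ◁ adj'.counit ⊗≫ 𝟙 _ := by
          bicategory
      _ = 𝟙 _ ⊗≫ f ◁ (𝟙 w ◁ adj.unit ≫ adj'.unit ▷ (e ≫ f)) ▷ k ⊗≫
            (f ≫ k ≫ f') ◁ adj.counit ▷ (f ≫ k) ⊗≫ (f ≫ k) ◁ adj'.counit ⊗≫ 𝟙 _ := by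
          rw [key2]; bicategory
      _ = 𝟙 _ ⊗≫ f ◁ (adj'.unit ▷ 𝟙 w ≫ (k ≫ f' ≫ f) ◁ adj.unit) ▷ k ⊗≫
            (f ≫ k ≫ f') ◁ adj.counit ▷ (f ≫ k) ⊗≫ (f ≫ k) ◁ adj'.counit ⊗≫ 𝟙 _ := by
          rw [whisker_exchange]
      _ = 𝟙 _ ⊗≫ f ◁ adj'.unit ▷ k ⊗≫
            (f ≫ k ≫ f') ◁ (rightZigzag adj.unit adj.counit) ▷ k ⊗≫
            (f ≫ k) ◁ adj'.counit ⊗≫ 𝟙 _ := by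
          bicategory
      _ = 𝟙 _ ⊗≫ f ◁ (leftZigzag adj'.unit adj'.counit) ⊗≫ 𝟙 _ := by
          rw [adj.right_triangle]; bicategory
      _ = (λ_ (f ≫ k)).hom ≫ (ρ_ (f ≫ k)).inv := by
          rw [adj'.left_triangle]; bicategory
  right_triangle := by
    calc
      _ = 𝟙 _ ⊗≫ f' ◁ inv adj.counit ⊗≫ f' ◁ f ◁ adj'.unit ▷ e ⊗≫
            (((f' ≫ f) ≫ k) ◁ (f' ◁ adj.counit) ≫ adj'.counit ▷ (f' ≫ 𝟙 x)) ⊗≫ 𝟙 _ := by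
          bicategory
      _ = 𝟙 _ ⊗≫ f' ◁ inv adj.counit ⊗≫ f' ◁ f ◁ adj'.unit ▷ e ⊗≫
            (adj'.counit ▷ (f' ≫ f ≫ e) ≫ 𝟙 y ◁ (f' ◁ adj.counit)) ⊗≫ 𝟙 _ := by
          rw [whisker_exchange]
      _ = 𝟙 _ ⊗≫ f' ◁ inv adj.counit ⊗≫ (rightZigzag adj'.unit adj'.counit) ▷ e ⊗≫
            f' ◁ adj.counit ⊗≫ 𝟙 _ := by
          bicategory
      _ = 𝟙 _ ⊗≫ f' ◁ (inv adj.counit ≫ adj.counit) ⊗≫ 𝟙 _ := by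
          rw [adj'.right_triangle]; bicategory
      _ = (ρ_ f').hom ≫ (λ_ f').inv := by
          rw [IsIso.inv_hom_id]; bicategory

end StmtAux

/-- left cancellation property: for 1-cells `f : x ⟶ w` and `f' : y ⟶ x`,
(a) if `f` is a lari then `f' ≫ f` is a lari iff `f'` is a lari;
(b) if `f` is a rari then `f' ≫ f` is a rari iff `f'` is a rari. -/
theorem stmt2 {B : Type*} [Bicategory B] {x w y : B} (f : x ⟶ w) (f' : y ⟶ x) :
    (IsLari f → (IsLari (f' ≫ f) ↔ IsLari f')) ∧
    (IsRari f → (IsRari (f' ≫ f) ↔ IsRari f')) := by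
  constructor
  · rintro ⟨g, adj, hu⟩
    haveI := hu
    constructor
    · rintro ⟨h, adj', hu'⟩
      haveI := hu'
      refine ⟨f ≫ h, StmtAux.lariCancelAdj adj adj', ?_⟩
      dsimp only [StmtAux.lariCancelAdj, bicategoricalComp]
      infer_instance
    · rintro ⟨g', adjf', hu'⟩
      haveI := hu'
      refine ⟨g ≫ g', adjf'.comp adj, ?_⟩
      rw [Bicategory.Adjunction.comp_unit]
      dsimp only [Bicategory.Adjunction.compUnit, bicategoricalComp]
      infer_instance
  · rintro ⟨e, adj, hc⟩
    haveI := hc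
    constructor
    · rintro ⟨k, adj', hc'⟩
      haveI := hc'
      refine ⟨f ≫ k, StmtAux.rariCancelAdj adj adj', ?_⟩
      dsimp only [StmtAux.rariCancelAdj, bicategoricalComp]
      infer_instance
    · rintro ⟨e', adjf', hc'⟩
      haveI := hc'
      refine ⟨e ≫ e', adj.comp adjf', ?_⟩
      rw [Bicategory.Adjunction.comp_counit]
      dsimp only [Bicategory.Adjunction.compCounit, bicategoricalComp]
      infer_instance
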